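/- arXiv:2011.07318 — 2 statements merged into one kernel-verified Lean document; each statement's English description precedes it below -/
import Mathlib

section
/- Let μ₁, μ₂, σ₁², σ₂² ∈ ℝ^D, where all components of σ₁² and σ₂² are bounded below by σ²_min > 0, and let δ = max(‖μ₁ − μ₂‖, ‖σ₁² − σ₂²‖) (Euclidean norms). Then the closed-form KL divergence between the two diagonal Gaussians, D_KL = (1/2)[∑_i ln(σ²_{2,i}/σ²_{1,i}) − D + ∑_i σ²_{1,i}/σ²_{2,i} + ∑_i (μ_{2,i} − μ_{1,i})²/σ²_{2,i}], satisfies D_KL ≤ (1/2)[2·D·δ/σ²_min + δ²/σ²_min]. -/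
private lemma div_le_abs_div {x a m : ℝ} (hm : 0 < m) (ha : m ≤ a) :
    x / a ≤ |x| / m := by
  rcases le_or_gt 0 x with hx | hx
  · calc x / a ≤ x / m := by gcongr
      _ ≤ |x| / m := by gcongr; exact le_abs_self x
  · have : x / a < 0 := div_neg_of_neg_of_pos hx (lt_of_lt_of_le hm ha)
    exact this.le.trans (div_nonneg (abs_nonneg x) hm.le)

private lemma comp_le_norm {D : ℕ} (x : EuclideanSpace ℝ (Fin D)) (i : Fin D) :
    |x i| ≤ ‖x‖ := by
  have h := EuclideanSpace.norm_eq x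
  rw [h]
  have : |x i| = Real.sqrt ((x i)^2) := (Real.sqrt_sq_eq_abs _).symm
  rw [this]
  apply Real.sqrt_le_sqrt
  have := Finset.single_le_sum (f := fun j => ‖x j‖^2)
    (fun j _ => sq_nonneg _) (Finset.mem_univ i)
  simpa [Real.norm_eq_abs, sq_abs] using this

/-- Bound on the closed-form KL divergence between two `D`-dimensional diagonal
Gaussians: with all variance components at least `σmin > 0` and
`δ = max (‖μ₁ - μ₂‖) (‖σ₁² - σ₂²‖)`, the KL divergence
`(1/2)[∑ ln(σ²₂ᵢ/σ²₁ᵢ) - D + ∑ σ²₁ᵢ/σ²₂ᵢ + ∑ (μ₂ᵢ - μ₁ᵢ)²/σ²₂ᵢ]`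
is at most `(1/2)[2·D·δ/σmin + δ²/σmin]`. -/
theorem kl_divergence_bound {D : ℕ} (μ₁ μ₂ σsq₁ σsq₂ : EuclideanSpace ℝ (Fin D))
    (σmin : ℝ) (hσmin : 0 < σmin)
    (h₁ : ∀ i, σmin ≤ σsq₁ i) (h₂ : ∀ i, σmin ≤ σsq₂ i)
    (δ : ℝ) (hδ : δ = max ‖μ₁ - μ₂‖ ‖σsq₁ - σsq₂‖) :
    (1 / 2 : ℝ) * ((∑ i : Fin D, Real.log (σsq₂ i / σsq₁ i)) - (D : ℝ)
        + (∑ i : Fin D, σsq₁ i / σsq₂ i)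
        + (∑ i : Fin D, (μ₂ i - μ₁ i) ^ 2 / σsq₂ i))
      ≤ (1 / 2 : ℝ) * (2 * (D : ℝ) * δ / σmin + δ ^ 2 / σmin) := by
  have hδμ : ‖μ₁ - μ₂‖ ≤ δ := hδ ▸ le_max_left _ _
  have hδσ : ‖σsq₁ - σsq₂‖ ≤ δ := hδ ▸ le_max_right _ _
  have hδ0 : 0 ≤ δ := le_trans (norm_nonneg _) hδμ
  -- per-coordinate bounds
  have key : ∀ i : Fin D,
      Real.log (σsq₂ i / σsq₁ i) - 1 + σsq₁ i / σsq₂ i ≤ 2 * δ / σmin := by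
    intro i
    have h1p : (0:ℝ) < σsq₁ i := lt_of_lt_of_le hσmin (h₁ i)
    have h2p : (0:ℝ) < σsq₂ i := lt_of_lt_of_le hσmin (h₂ i)
    have hlog : Real.log (σsq₂ i / σsq₁ i) ≤ σsq₂ i / σsq₁ i - 1 :=
      Real.log_le_sub_one_of_pos (div_pos h2p h1p)
    have hA : σsq₂ i / σsq₁ i - 1 = (σsq₂ i - σsq₁ i) / σsq₁ i := by
      field_simp
    have hB : σsq₁ i / σsq₂ i - 1 = (σsq₁ i - σsq₂ i) / σsq₂ i := by
      field_simp
    have hcomp : |σsq₁ i - σsq₂ i| ≤ δ := by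
      have := comp_le_norm (σsq₁ - σsq₂) i
      simp only [PiLp.sub_apply] at this
      exact this.trans hδσ
    have hcomp' : |σsq₂ i - σsq₁ i| ≤ δ := by rwa [abs_sub_comm]
    have b1 : (σsq₂ i - σsq₁ i) / σsq₁ i ≤ δ / σmin :=
      (div_le_abs_div hσmin (h₁ i)).trans (by gcongr)
    have b2 : (σsq₁ i - σsq₂ i) / σsq₂ i ≤ δ / σmin :=
      (div_le_abs_div hσmin (h₂ i)).trans (by gcongr)
    have : Real.log (σsq₂ i / σsq₁ i) - 1 + σsq₁ i / σsq₂ i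
        ≤ (σsq₂ i - σsq₁ i) / σsq₁ i + (σsq₁ i - σsq₂ i) / σsq₂ i := by
      nlinarith [hlog, hA, hB]
    have hr : δ / σmin + δ / σmin = 2 * δ / σmin := by ring
    linarith [b1, b2]
  have hμsum : ∑ i : Fin D, (μ₂ i - μ₁ i) ^ 2 ≤ δ ^ 2 := by
    have hn : ‖μ₁ - μ₂‖ ^ 2 = ∑ i : Fin D, (μ₁ i - μ₂ i) ^ 2 := by
      rw [EuclideanSpace.norm_eq, Real.sq_sqrt (Finset.sum_nonneg fun j _ => sq_nonneg _)]
      simp [Real.norm_eq_abs, sq_abs]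
    have : ∑ i : Fin D, (μ₂ i - μ₁ i) ^ 2 = ‖μ₁ - μ₂‖ ^ 2 := by
      rw [hn]; apply Finset.sum_congr rfl; intro i _; ring
    rw [this]
    exact pow_le_pow_left₀ (norm_nonneg _) hδμ 2
  have hμ : ∑ i : Fin D, (μ₂ i - μ₁ i) ^ 2 / σsq₂ i ≤ δ ^ 2 / σmin := by
    calc ∑ i : Fin D, (μ₂ i - μ₁ i) ^ 2 / σsq₂ i
        ≤ ∑ i : Fin D, (μ₂ i - μ₁ i) ^ 2 / σmin := by
          apply Finset.sum_le_sum; intro i _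
          exact div_le_div_of_nonneg_left (sq_nonneg _) hσmin (h₂ i)
      _ = (∑ i : Fin D, (μ₂ i - μ₁ i) ^ 2) / σmin := by
          rw [Finset.sum_div]
      _ ≤ δ ^ 2 / σmin := by gcongr
  have hmain : (∑ i : Fin D, Real.log (σsq₂ i / σsq₁ i)) - (D : ℝ)
      + (∑ i : Fin D, σsq₁ i / σsq₂ i) ≤ 2 * (D : ℝ) * δ / σmin := by
    have : (∑ i : Fin D, (Real.log (σsq₂ i / σsq₁ i) - 1 + σsq₁ i / σsq₂ i))
        ≤ ∑ i : Fin D, 2 * δ / σmin := Finset.sum_le_sum fun i _ => key i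
    simp only [Finset.sum_add_distrib, Finset.sum_sub_distrib, Finset.sum_const,
      Finset.card_univ, Fintype.card_fin, nsmul_eq_mul, mul_one] at this
    calc (∑ i : Fin D, Real.log (σsq₂ i / σsq₁ i)) - (D : ℝ)
        + (∑ i : Fin D, σsq₁ i / σsq₂ i) ≤ (D : ℝ) * (2 * δ / σmin) := by linarith
      _ = 2 * (D : ℝ) * δ / σmin := by ring
  have := add_le_add hmain hμ
  linarith
end

section
/- Let E be a metric space, K ≥ 0, and let μ : E → ℝ^D and σ² : E → ℝ^D be K-Lipschitz maps (with the Euclidean metric on ℝ^D) such that every component of σ²(e) is bounded below by σ²_min > 0 for all e ∈ E. Let e₁, e₂ ∈ E with d(e₁, e₂) = ε_e. Then the closed-form KL divergence between the diagonal Gaussians N(μ(e₁), diag(σ²(e₁))) and N(μ(e₂), diag(σ²(e₂))), namely (1/2)[∑_i ln(σ²_i(e₂)/σ²_i(e₁)) − D + ∑_i σ²_i(e₁)/σ²_i(e₂) + ∑_i (μ_i(e₂) − μ_i(e₁))²/σ²_i(e₂)], is at most (1/2)[2·D·K·ε_e/σ²_min + (K·ε_e)²/σ²_min]; in particular it is in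 O((ε_e K)²). -/
/-- Proposition 1: if the SAC actor mean `μ` and variance `σ²` are `K`-Lipschitz
maps from the embedding space `E` into `ℝ^D`, with all variance components at
least `σmin > 0`, then for embeddings `e₁, e₂` at distance `ε_e` the closed-form
KL divergence between the two diagonal Gaussian action distributions is at most
`(1/2)[2·D·K·ε_e/σmin + (K·ε_e)²/σmin]`, i.e. it is in `O((ε_e K)²)`. -/
theorem sac_kl_bound {D : ℕ} {E : Type*} [MetricSpace E]
    (K : ℝ) (hK : 0 ≤ K)
    (μ σsq : E → EuclideanSpace ℝ (Fin D))
    (hμLip : ∀ x y : E, dist (μ x) (μ y) ≤ K * dist x y)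
    (hσLip : ∀ x y : E, dist (σsq x) (σsq y) ≤ K * dist x y)
    (σmin : ℝ) (hσmin : 0 < σmin)
    (hσsq : ∀ (e : E) (i : Fin D), σmin ≤ σsq e i)
    (e₁ e₂ : E) (εₑ : ℝ) (hε : dist e₁ e₂ = εₑ) :
    (1 / 2 : ℝ) * ((∑ i : Fin D, Real.log (σsq e₂ i / σsq e₁ i)) - (D : ℝ)
        + (∑ i : Fin D, σsq e₁ i / σsq e₂ i)
        + (∑ i : Fin D, (μ e₂ i - μ e₁ i) ^ 2 / σsq e₂ i))
      ≤ (1 / 2 : ℝ) * (2 * (D : ℝ) * (K * εₑ) / σmin + (K * εₑ) ^ 2 / σmin) := by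
  have hε0 : 0 ≤ εₑ := hε ▸ dist_nonneg
  set L := K * εₑ with hLdef
  have hL0 : 0 ≤ L := mul_nonneg hK hε0
  have hcoord : ∀ (f : E → EuclideanSpace ℝ (Fin D)) (x y : E) (i : Fin D),
      |f x i - f y i| ≤ dist (f x) (f y) := by
    intro f x y i
    rw [EuclideanSpace.dist_eq, ← Real.sqrt_sq_eq_abs]
    apply Real.sqrt_le_sqrt
    have := Finset.single_le_sum (f := fun j => dist (f x j) (f y j) ^ 2)
      (fun j _ => sq_nonneg _) (Finset.mem_univ i)
    simpa [Real.dist_eq, sq_abs] using this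
  have hσpos : ∀ e i, (0:ℝ) < σsq e i := fun e i => lt_of_lt_of_le hσmin (hσsq e i)
  have hσd : ∀ i, |σsq e₂ i - σsq e₁ i| ≤ L := by
    intro i
    calc |σsq e₂ i - σsq e₁ i| ≤ dist (σsq e₂) (σsq e₁) := hcoord σsq e₂ e₁ i
    _ ≤ K * dist e₂ e₁ := hσLip e₂ e₁
    _ = L := by rw [dist_comm, hε]
  have hA : ∑ i : Fin D, Real.log (σsq e₂ i / σsq e₁ i) ≤ (D:ℝ) * (L / σmin) := by
    calc ∑ i : Fin D, Real.log (σsq e₂ i / σsq e₁ i)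
        ≤ ∑ _i : Fin D, L / σmin := by
          apply Finset.sum_le_sum
          intro i _
          have h1 : Real.log (σsq e₂ i / σsq e₁ i) ≤ σsq e₂ i / σsq e₁ i - 1 :=
            Real.log_le_sub_one_of_pos (div_pos (hσpos e₂ i) (hσpos e₁ i))
          have h2 : σsq e₂ i / σsq e₁ i - 1 = (σsq e₂ i - σsq e₁ i) / σsq e₁ i :=
            div_sub_one (hσpos e₁ i).ne'
          have h3 : (σsq e₂ i - σsq e₁ i) / σsq e₁ i ≤ L / σmin :=
            div_le_div₀ hL0 (le_trans (le_abs_self _) (hσd i)) hσmin (hσsq e₁ i)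
          linarith
    _ = (D:ℝ) * (L / σmin) := by simp [Finset.sum_const, mul_comm]
  have hB : ∑ i : Fin D, σsq e₁ i / σsq e₂ i ≤ (D:ℝ) * (1 + L / σmin) := by
    calc ∑ i : Fin D, σsq e₁ i / σsq e₂ i
        ≤ ∑ _i : Fin D, (1 + L / σmin) := by
          apply Finset.sum_le_sum
          intro i _
          have h2 : σsq e₁ i / σsq e₂ i - 1 = (σsq e₁ i - σsq e₂ i) / σsq e₂ i :=
            div_sub_one (hσpos e₂ i).ne'
          have h3 : (σsq e₁ i - σsq e₂ i) / σsq e₂ i ≤ L / σmin :=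
            div_le_div₀ hL0
              (le_trans (le_abs_self _) (by rw [abs_sub_comm]; exact hσd i))
              hσmin (hσsq e₂ i)
          linarith
    _ = (D:ℝ) * (1 + L / σmin) := by simp [Finset.sum_const]; ring
  have hC : ∑ i : Fin D, (μ e₂ i - μ e₁ i) ^ 2 / σsq e₂ i ≤ L ^ 2 / σmin := by
    have hsum : ∑ i : Fin D, (μ e₂ i - μ e₁ i) ^ 2 ≤ L ^ 2 := by
      have hd : dist (μ e₂) (μ e₁) ≤ L := by
        calc dist (μ e₂) (μ e₁) ≤ K * dist e₂ e₁ := hμLip e₂ e₁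
        _ = L := by rw [dist_comm, hε]
      have heq : dist (μ e₂) (μ e₁) ^ 2 = ∑ i : Fin D, (μ e₂ i - μ e₁ i) ^ 2 := by
        rw [EuclideanSpace.dist_eq, Real.sq_sqrt
          (Finset.sum_nonneg fun i _ => sq_nonneg _)]
        simp [Real.dist_eq, sq_abs]
      calc ∑ i : Fin D, (μ e₂ i - μ e₁ i) ^ 2 = dist (μ e₂) (μ e₁) ^ 2 := heq.symm
      _ ≤ L ^ 2 := by nlinarith [dist_nonneg (x := μ e₂) (y := μ e₁)]
    calc ∑ i : Fin D, (μ e₂ i - μ e₁ i) ^ 2 / σsq e₂ i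
        ≤ ∑ i : Fin D, (μ e₂ i - μ e₁ i) ^ 2 / σmin := by
          apply Finset.sum_le_sum
          intro i _
          exact div_le_div_of_nonneg_left (sq_nonneg _) hσmin (hσsq e₂ i)
    _ = (∑ i : Fin D, (μ e₂ i - μ e₁ i) ^ 2) / σmin := by
          rw [Finset.sum_div]
    _ ≤ L ^ 2 / σmin := by gcongr
  have key : 2 * (D : ℝ) * L / σmin = (D:ℝ) * (L / σmin) + (D:ℝ) * (L / σmin) := by
    ring
  linarith
end
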